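/- For every Peano continuum X and every ε > 0, there exists a finite cover F of X by Peano subcontinua such that each F in the cover equals the closure of its interior and each member has diameter less than ε. -/

import Mathlib

open Set Metric Topology Bornology

/-- A Peano subcontinuum of `X`: a compact connected subset that is locally
connected in the subspace topology. -/
def IsPeanoSubcontinuum {X : Type*} [MetricSpace X] (A : Set X) : Prop :=
  IsCompact A ∧ IsConnected A ∧ LocallyConnectedSpace ↥A

section Grow

variable {X : Type*} [MetricSpace X]

/-- Repeatedly enlarge `S` by adjoining all members of `𝒰 n` that meet the
current stage. -/
def grow (𝒰 : ℕ → Set (Set X)) (S : Set X) : ℕ → Set X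
  | 0 => S
  | n + 1 => ⋃₀ {P | P ∈ 𝒰 n ∧ (P ∩ grow 𝒰 S n).Nonempty}

variable {𝒰 : ℕ → Set (Set X)} {S T : Set X}

lemma grow_succ (n : ℕ) :
    grow 𝒰 S (n + 1) = ⋃₀ {P | P ∈ 𝒰 n ∧ (P ∩ grow 𝒰 S n).Nonempty} := rfl

lemma grow_subset_succ (hcov : ∀ n, univ ⊆ ⋃₀ 𝒰 n) (n : ℕ) :
    grow 𝒰 S n ⊆ grow 𝒰 S (n + 1) := by
  intro y hy
  obtain ⟨P, hP, hyP⟩ := hcov n (mem_univ y)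
  exact ⟨P, ⟨hP, ⟨y, hyP, hy⟩⟩, hyP⟩

lemma grow_mono (hcov : ∀ n, univ ⊆ ⋃₀ 𝒰 n) {m n : ℕ} (h : m ≤ n) :
    grow 𝒰 S m ⊆ grow 𝒰 S n :=
  monotone_nat_of_le_succ (fun k => grow_subset_succ hcov k) h

lemma grow_mono_set (h : S ⊆ T) (n : ℕ) : grow 𝒰 S n ⊆ grow 𝒰 T n := by
  induction n with
  | zero => exact h
  | succ n ih =>
    rintro y ⟨P, ⟨hP, z, hz1, hz2⟩, hyP⟩
    exact ⟨P, ⟨hP, ⟨z, hz1, ih hz2⟩⟩, hyP⟩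

lemma grow_shift (N : ℕ) : ∀ m : ℕ,
    grow 𝒰 S (N + m) = grow (fun k => 𝒰 (N + k)) (grow 𝒰 S N) m := by
  intro m
  induction m with
  | zero => rfl
  | succ m ih =>
    show grow 𝒰 S ((N + m) + 1) = _
    rw [grow_succ, grow_succ, ih]

lemma grow_iUnion {ι : Type*} (S : ι → Set X) (n : ℕ) :
    grow 𝒰 (⋃ i, S i) n = ⋃ i, grow 𝒰 (S i) n := by
  induction n with
  | zero => rfl
  | succ n ih =>
    rw [grow_succ, ih]
    ext y
    constructor
    · rintro ⟨P, ⟨hP, z, hz1, hz2⟩, hyP⟩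
      obtain ⟨i, hi⟩ := mem_iUnion.mp hz2
      exact mem_iUnion.mpr ⟨i, P, ⟨hP, ⟨z, hz1, hi⟩⟩, hyP⟩
    · intro hy
      obtain ⟨i, P, ⟨hP, z, hz1, hz2⟩, hyP⟩ := mem_iUnion.mp hy
      exact ⟨P, ⟨hP, ⟨z, hz1, mem_iUnion.mpr ⟨i, hz2⟩⟩⟩, hyP⟩

lemma grow_preconnected (hcov : ∀ n, univ ⊆ ⋃₀ 𝒰 n)
    (hS : IsPreconnected S) (hSne : S.Nonempty)
    (hP : ∀ n, ∀ P ∈ 𝒰 n, IsPreconnected P) : ∀ n, IsPreconnected (grow 𝒰 S n) := by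
  intro n
  induction n with
  | zero => exact hS
  | succ n ih =>
    obtain ⟨s0, hs0⟩ := hSne
    have hs0' : s0 ∈ grow 𝒰 S n := grow_mono hcov (Nat.zero_le n) hs0
    have key : grow 𝒰 S (n + 1)
        = ⋃₀ {Q | ∃ P, (P ∈ 𝒰 n ∧ (P ∩ grow 𝒰 S n).Nonempty) ∧ Q = P ∪ grow 𝒰 S n} := by
      apply Subset.antisymm
      · rintro y ⟨P, ⟨hP, hne⟩, hyP⟩
        exact ⟨P ∪ grow 𝒰 S n, ⟨P, ⟨hP, hne⟩, rfl⟩, Or.inl hyP⟩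
      · rintro y ⟨Q, ⟨P, ⟨hP, hne⟩, rfl⟩, hy⟩
        rcases hy with hy | hy
        · exact ⟨P, ⟨hP, hne⟩, hy⟩
        · exact grow_subset_succ hcov n hy
    rw [key]
    apply isPreconnected_sUnion s0
    · rintro Q ⟨P, _, rfl⟩
      exact Or.inr hs0'
    · rintro Q ⟨P, ⟨hPmem, z, hz1, hz2⟩, rfl⟩
      exact IsPreconnected.union z hz1 hz2 (hP n P hPmem) ih

lemma grow_subset_closedBall (x0 : X) {R0 c : ℝ} (hc : 0 ≤ c)
    (hS : S ⊆ closedBall x0 R0)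
    (hb : ∀ n, ∀ P ∈ 𝒰 n, IsBounded P ∧ diam P ≤ c / 2 ^ n) :
    ∀ n, grow 𝒰 S n ⊆ closedBall x0 (R0 + (2 * c - 2 * c / 2 ^ n)) := by
  intro n
  induction n with
  | zero => show S ⊆ _; simpa using hS
  | succ n ih =>
    rintro y ⟨P, ⟨hP, z, hz1, hz2⟩, hyP⟩
    have hz3 := ih hz2
    rw [mem_closedBall] at hz3 ⊢
    have h1 : dist y z ≤ c / 2 ^ n := le_trans
      (dist_le_diam_of_mem (hb n P hP).1 hyP hz1) (hb n P hP).2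
    have h2 : dist y x0 ≤ dist y z + dist z x0 := dist_triangle y z x0
    have h3 : (2 : ℝ) * c / 2 ^ (n + 1) = c / 2 ^ n := by
      rw [pow_succ]; ring
    have h4 : (2 : ℝ) * c / 2 ^ n = 2 * (c / 2 ^ n) := by ring
    linarith [h1, h2, h3, h4]

lemma grow_subset_closedBall' (x0 : X) {R0 c : ℝ} (hc : 0 ≤ c)
    (hS : S ⊆ closedBall x0 R0)
    (hb : ∀ n, ∀ P ∈ 𝒰 n, IsBounded P ∧ diam P ≤ c / 2 ^ n) (n : ℕ) :
    grow 𝒰 S n ⊆ closedBall x0 (R0 + 2 * c) := by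
  refine (grow_subset_closedBall x0 hc hS hb n).trans (closedBall_subset_closedBall ?_)
  have : 0 ≤ 2 * c / 2 ^ n := by positivity
  linarith

end Grow

/-- A closed set with "property S" (finite covers by preconnected subsets of
arbitrarily small diameter) is locally connected as a subspace. -/
lemma locallyConnected_of_propS {X : Type*} [MetricSpace X] {A : Set X}
    (hS : ∀ δ : ℝ, 0 < δ → ∃ 𝒞 : Set (Set X), 𝒞.Finite ∧
      (∀ P ∈ 𝒞, P ⊆ A ∧ IsBounded P ∧ IsPreconnected P ∧ diam P ≤ δ) ∧ A ⊆ ⋃₀ 𝒞) :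
    LocallyConnectedSpace ↥A := by
  rw [locallyConnectedSpace_iff_connected_subsets]
  intro a U hU
  rw [nhds_subtype] at hU
  obtain ⟨W, hW, hWU⟩ := hU
  obtain ⟨r, hr, hball⟩ := Metric.mem_nhds_iff.mp hW
  obtain ⟨𝒞, h𝒞fin, h𝒞, hcov⟩ := hS (r / 3) (by positivity)
  set N : Set X := insert (↑a) (⋃₀ {P | P ∈ 𝒞 ∧ (↑a : X) ∈ closure P}) with hN
  have hNA : N ⊆ A :=
    insert_subset a.2 (sUnion_subset fun P hP => (h𝒞 P hP.1).1)
  have hNball : N ⊆ ball (↑a) r := by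
    intro y hy
    rcases hy with rfl | ⟨P, ⟨hP𝒞, haP⟩, hyP⟩
    · exact mem_ball_self hr
    · have hyc : y ∈ closure P := subset_closure hyP
      have hd : dist y (↑a) ≤ diam (closure P) :=
        dist_le_diam_of_mem (h𝒞 P hP𝒞).2.1.closure hyc haP
      rw [diam_closure] at hd
      have := (h𝒞 P hP𝒞).2.2.2
      rw [mem_ball]
      linarith
  have hNpre : IsPreconnected N := by
    have key : N = ⋃₀ (insert {(↑a : X)}
        ((fun P => insert (↑a : X) P) '' {P | P ∈ 𝒞 ∧ (↑a : X) ∈ closure P})) := by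
      ext y
      simp only [hN, mem_insert_iff, mem_sUnion, mem_singleton_iff, mem_image,
        mem_setOf_eq]
      constructor
      · rintro (rfl | ⟨P, hP, hyP⟩)
        · exact ⟨{(↑a : X)}, Or.inl rfl, rfl⟩
        · exact ⟨insert (↑a : X) P, Or.inr ⟨P, hP, rfl⟩, Or.inr hyP⟩
      · rintro ⟨t, ht | ⟨P, hP, rfl⟩, hyt⟩
        · exact Or.inl (by simpa [ht] using hyt)
        · rcases hyt with rfl | hyP
          · exact Or.inl rfl
          · exact Or.inr ⟨P, hP, hyP⟩
    rw [key]
    apply isPreconnected_sUnion (↑a)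
    · rintro t (rfl | ⟨P, hP, rfl⟩)
      · exact mem_singleton _
      · exact mem_insert _ _
    · rintro t (rfl | ⟨P, ⟨hP𝒞, haP⟩, rfl⟩)
      · exact isPreconnected_singleton
      · exact (h𝒞 P hP𝒞).2.2.1.subset_closure (subset_insert _ _)
          (insert_subset haP subset_closure)
  -- N is a neighborhood of a inside A
  set C : Set X := ⋃ P ∈ {P | P ∈ 𝒞 ∧ (↑a : X) ∉ closure P}, closure P with hC
  have hCclosed : IsClosed C :=
    (h𝒞fin.subset (fun P hP => hP.1)).isClosed_biUnion fun P _ => isClosed_closure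
  have haC : (↑a : X) ∉ C := by
    rw [hC]
    simp only [mem_iUnion, mem_setOf_eq, not_exists]
    rintro P ⟨hP𝒞, haP⟩ h
    exact haP h
  have hsub : A ∩ Cᶜ ⊆ N := by
    rintro y ⟨hyA, hyC⟩
    obtain ⟨P, hP𝒞, hyP⟩ := hcov hyA
    by_cases haP : (↑a : X) ∈ closure P
    · exact Or.inr ⟨P, ⟨hP𝒞, haP⟩, hyP⟩
    · have hPmem : P ∈ {P | P ∈ 𝒞 ∧ (↑a : X) ∉ closure P} := ⟨hP𝒞, haP⟩
      exact absurd (mem_biUnion hPmem (subset_closure hyP)) hyC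
  refine ⟨Subtype.val ⁻¹' N, ?_, ?_, ?_⟩
  · refine Filter.mem_of_superset
      ((hCclosed.isOpen_compl.preimage continuous_subtype_val).mem_nhds haC) ?_
    intro b hb
    have : (↑b : X) ∈ A ∩ Cᶜ := ⟨b.2, hb⟩
    exact hsub this
  · have himg : Subtype.val '' (Subtype.val ⁻¹' N : Set ↥A) = N := by
      rw [Subtype.image_preimage_coe, inter_eq_right.mpr hNA]
    exact IsInducing.subtypeVal.isPreconnected_image.mp (by rw [himg]; exact hNpre)
  · intro b hb
    exact hWU (hball (hNball hb))

/-- Existence of finite covers by open connected sets of small diameter. -/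
lemma exists_fine_open_cover {X : Type*} [MetricSpace X] [CompactSpace X]
    [LocallyConnectedSpace X] {r : ℝ} (hr : 0 < r) :
    ∃ 𝒰 : Set (Set X), 𝒰.Finite ∧
      (∀ P ∈ 𝒰, IsOpen P ∧ IsPreconnected P ∧ diam P ≤ r) ∧ univ ⊆ ⋃₀ 𝒰 := by
  have h := locallyConnectedSpace_iff_subsets_isOpen_isConnected.mp ‹_›
  choose V hVsub hVopen hVmem hVconn using fun y : X =>
    h y (ball y (r / 2)) (ball_mem_nhds y (by positivity))
  obtain ⟨t, ht⟩ := isCompact_univ.elim_finite_subcover V hVopen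
    (fun y _ => mem_iUnion.mpr ⟨y, hVmem y⟩)
  refine ⟨V '' ↑t, t.finite_toSet.image _, ?_, ?_⟩
  · rintro P ⟨y, _, rfl⟩
    refine ⟨hVopen y, (hVconn y).isPreconnected, ?_⟩
    calc diam (V y) ≤ diam (ball y (r / 2)) := diam_mono (hVsub y) isBounded_ball
      _ ≤ 2 * (r / 2) := diam_ball (by positivity)
      _ = r := by ring
  · intro z hz
    obtain ⟨_, ⟨y, rfl⟩, _, ⟨hyt, rfl⟩, hzy⟩ := ht hz
    exact ⟨V y, ⟨y, hyt, rfl⟩, hzy⟩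

/-- The key local construction: every point has an open connected neighborhood
contained in a small closed ball whose closure is locally connected. -/
lemma exists_peano_nbhd {X : Type*} [MetricSpace X] [CompactSpace X]
    [LocallyConnectedSpace X] (x : X) {ε0 : ℝ} (hε0 : 0 < ε0) :
    ∃ V : Set X, IsOpen V ∧ x ∈ V ∧ V ⊆ closedBall x (2 * ε0) ∧ IsPreconnected V ∧
      LocallyConnectedSpace ↥(closure V) := by
  have hbAll : ∀ s : Set X, IsBounded s :=
    fun s => (isCompact_univ.isBounded).subset (subset_univ s)
  have hfam : ∀ n : ℕ, ∃ 𝒰 : Set (Set X), 𝒰.Finite ∧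
      (∀ P ∈ 𝒰, IsOpen P ∧ IsPreconnected P ∧ diam P ≤ ε0 / 2 ^ n) ∧ univ ⊆ ⋃₀ 𝒰 :=
    fun n => exists_fine_open_cover (by positivity)
  choose 𝒰 h1 h2 h3 using hfam
  have hb : ∀ n, ∀ P ∈ 𝒰 n, IsBounded P ∧ diam P ≤ ε0 / 2 ^ n :=
    fun n P hP => ⟨hbAll P, (h2 n P hP).2.2⟩
  set g : ℕ → Set X := grow 𝒰 {x} with hg
  have hx0 : x ∈ g 0 := rfl
  have hgx : ∀ n, x ∈ g n := fun n => grow_mono h3 (Nat.zero_le n) hx0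
  have hgpre : ∀ n, IsPreconnected (g n) :=
    grow_preconnected h3 isPreconnected_singleton ⟨x, rfl⟩
      (fun n P hP => (h2 n P hP).2.1)
  have hgball : ∀ n, g n ⊆ closedBall x (2 * ε0) := by
    intro n
    have h0 : ({x} : Set X) ⊆ closedBall x 0 :=
      singleton_subset_iff.mpr (mem_closedBall_self le_rfl)
    have := grow_subset_closedBall' x (le_of_lt hε0) h0 hb n
    rwa [zero_add] at this
  set V : Set X := ⋃ n, g (n + 1) with hV
  have hxV : x ∈ V := mem_iUnion.mpr ⟨0, hgx 1⟩
  refine ⟨V, ?_, hxV, ?_, ?_, ?_⟩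
  · refine isOpen_iUnion fun n => ?_
    rw [hg, grow_succ]
    exact isOpen_sUnion fun P hP => (h2 n P hP.1).1
  · exact iUnion_subset fun n => hgball (n + 1)
  · exact isPreconnected_iUnion ⟨x, mem_iInter.mpr fun n => hgx (n + 1)⟩
      (fun n => hgpre (n + 1))
  · apply locallyConnected_of_propS
    intro δ hδ
    obtain ⟨K, hK⟩ := pow_unbounded_of_one_lt (8 * ε0 / δ) (one_lt_two (α := ℝ))
    have h2K : (0 : ℝ) < 2 ^ K := by positivity
    have h2K1 : (0 : ℝ) < 2 ^ (K + 1) := by positivity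
    have hKδ : 8 * ε0 / 2 ^ (K + 1) < δ := by
      rw [div_lt_iff₀ hδ] at hK
      rw [div_lt_iff₀ h2K1, pow_succ]
      nlinarith
    set sel : Set (Set X) := {P | P ∈ 𝒰 K ∧ (P ∩ g K).Nonempty} with hsel
    have hgK1 : g (K + 1) = ⋃₀ sel := rfl
    set 𝒰' : ℕ → Set (Set X) := fun k => 𝒰 (K + 1 + k) with h𝒰'
    have hcov' : ∀ k, univ ⊆ ⋃₀ 𝒰' k := fun k => h3 _
    have hb' : ∀ k, ∀ P ∈ 𝒰' k, IsBounded P ∧ diam P ≤ ε0 / 2 ^ (K + 1) / 2 ^ k := by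
      intro k P hP
      refine ⟨hbAll P, ?_⟩
      have := (h2 (K + 1 + k) P hP).2.2
      rwa [pow_add, ← div_div] at this
    set Cl : Set X → Set X := fun U => ⋃ m, grow 𝒰' U m with hCl
    have hClsubV : ∀ U ∈ sel, Cl U ⊆ V := by
      intro U hU
      refine iUnion_subset fun m => ?_
      have hUg : U ⊆ g (K + 1) := by
        rw [hgK1]; exact subset_sUnion_of_mem hU
      have h4 : grow 𝒰' U m ⊆ grow 𝒰' (g (K + 1)) m := grow_mono_set hUg m
      have h5 : grow 𝒰' (g (K + 1)) m = g (K + 1 + m) := (grow_shift (K + 1) m).symm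
      have h6 : g (K + 1 + m) ⊆ V := by
        have he : K + 1 + m = (K + m) + 1 := by omega
        rw [he]
        exact subset_iUnion (fun n => g (n + 1)) (K + m)
      exact (h4.trans (le_of_eq h5)).trans h6
    refine ⟨(fun U => closure (Cl U)) '' sel, ?_, ?_, ?_⟩
    · exact (((h1 K).subset fun P hP => hP.1).image _)
    · rintro Q ⟨U, hU, rfl⟩
      obtain ⟨z, hz⟩ := hU.2
      have hUne : U.Nonempty := ⟨z, hz.1⟩
      have hUpre := (h2 K U hU.1).2.1
      obtain ⟨u, hu⟩ := hUne
      have hU0 : U ⊆ closedBall u (ε0 / 2 ^ K) := fun y hy =>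
        mem_closedBall.mpr (le_trans (dist_le_diam_of_mem (hbAll U) hy hu)
          (h2 K U hU.1).2.2)
      have hClball : Cl U ⊆ closedBall u (ε0 / 2 ^ K + 2 * (ε0 / 2 ^ (K + 1))) :=
        iUnion_subset fun m => grow_subset_closedBall' u (by positivity) hU0 hb' m
      refine ⟨?_, hbAll _, ?_, ?_⟩
      · exact closure_mono (hClsubV U hU)
      · refine (isPreconnected_iUnion ?_ ?_).closure
        · exact ⟨u, mem_iInter.mpr fun m => grow_mono hcov' (Nat.zero_le m) hu⟩
        · exact fun m => grow_preconnected hcov' hUpre ⟨u, hu⟩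
            (fun k P hP => (h2 _ P hP).2.1) m
      · rw [diam_closure]
        have hrad : (0 : ℝ) ≤ ε0 / 2 ^ K + 2 * (ε0 / 2 ^ (K + 1)) := by positivity
        have hd1 : diam (Cl U) ≤ 2 * (ε0 / 2 ^ K + 2 * (ε0 / 2 ^ (K + 1))) :=
          le_trans (diam_mono hClball isBounded_closedBall) (diam_closedBall hrad)
        have hpow : (ε0 : ℝ) / 2 ^ K = 2 * (ε0 / 2 ^ (K + 1)) := by
          rw [pow_succ]; field_simp
        have h8 : (8 : ℝ) * ε0 / 2 ^ (K + 1) = 8 * (ε0 / 2 ^ (K + 1)) := by ring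
        linarith
    · have hVsub : V ⊆ ⋃₀ ((fun U => Cl U) '' sel) := by
        intro y hy
        obtain ⟨n, hn⟩ := mem_iUnion.mp hy
        have hy2 : y ∈ grow (fun k => 𝒰 (K + 1 + k)) (⋃ U : sel, (U : Set X)) n := by
          have h7 : y ∈ grow 𝒰 {x} (K + 1 + n) := grow_mono h3 (by omega) hn
          rw [grow_shift (K + 1) n] at h7
          rwa [show grow 𝒰 {x} (K + 1) = ⋃ U : sel, (U : Set X) from by
            rw [← sUnion_eq_iUnion]; exact hgK1] at h7
        rw [grow_iUnion (fun U : sel => (U : Set X)) n] at hy2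
        obtain ⟨U, hU⟩ := mem_iUnion.mp hy2
        exact ⟨Cl U, ⟨U, U.2, rfl⟩, mem_iUnion.mpr ⟨n, hU⟩⟩
      have hfin : ((fun U => Cl U) '' sel).Finite :=
        ((h1 K).subset fun P hP => hP.1).image _
      calc closure V ⊆ closure (⋃₀ ((fun U => Cl U) '' sel)) := closure_mono hVsub
        _ = ⋃ Q ∈ (fun U => Cl U) '' sel, closure Q := hfin.closure_sUnion
        _ ⊆ ⋃₀ ((fun U => closure (Cl U)) '' sel) := by
            rintro y hy
            obtain ⟨Q, ⟨U, hU, rfl⟩, hyQ⟩ := mem_iUnion₂.mp hy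
            exact ⟨closure (Cl U), ⟨U, hU, rfl⟩, hyQ⟩

/-- For every Peano continuum `X` and every `ε > 0` there is a finite cover of `X`
by Peano subcontinua, each equal to the closure of its interior and of diameter
less than `ε`. -/
theorem fine_covers_by_peano_subcontinua {X : Type*} [MetricSpace X] [CompactSpace X]
    [ConnectedSpace X] [LocallyConnectedSpace X] (ε : ℝ) (hε : 0 < ε) :
    ∃ F : Finset (Set X), ⋃₀ (F : Set (Set X)) = univ ∧
      ∀ A ∈ F, IsPeanoSubcontinuum A ∧ A = closure (interior A) ∧ diam A < ε := by
  classical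
  have hε0 : 0 < ε / 5 := by positivity
  choose V hVopen hVmem hVball hVpre hVlc using fun x : X => exists_peano_nbhd x hε0
  obtain ⟨t, ht⟩ := isCompact_univ.elim_finite_subcover V hVopen
    (fun y _ => mem_iUnion.mpr ⟨y, hVmem y⟩)
  refine ⟨t.image (fun x => closure (V x)), ?_, ?_⟩
  · apply Subset.antisymm (sUnion_subset fun A _ => subset_univ A)
    intro z hz
    obtain ⟨_, ⟨y, rfl⟩, _, ⟨hyt, rfl⟩, hzy⟩ := ht hz
    exact ⟨closure (V y), by simp [Finset.mem_image]; exact ⟨y, hyt, rfl⟩,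
      subset_closure hzy⟩
  · intro A hA
    obtain ⟨y, hyt, rfl⟩ := Finset.mem_image.mp hA
    have hcompact : IsCompact (closure (V y)) := isClosed_closure.isCompact
    have hconn : IsConnected (closure (V y)) :=
      ⟨⟨y, subset_closure (hVmem y)⟩, (hVpre y).closure⟩
    refine ⟨⟨hcompact, hconn, hVlc y⟩, ?_, ?_⟩
    · apply Subset.antisymm
      · have hsub : V y ⊆ interior (closure (V y)) :=
          (hVopen y).subset_interior_iff.mpr subset_closure
        exact (closure_mono hsub).trans (le_of_eq rfl) |>.trans Subset.rfl
      · exact (closure_mono interior_subset).trans (le_of_eq closure_closure)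
    · rw [diam_closure]
      have h1 : diam (V y) ≤ 2 * (2 * (ε / 5)) :=
        le_trans (diam_mono (hVball y) isBounded_closedBall)
          (diam_closedBall (by positivity))
      linarith
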